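/- There exists a real constant ε₀ > 0 such that for every real ε with 0 < ε < ε₀, every simple graph G on a finite vertex set, every nontrivial cluster C of the agreement decomposition of G with parameter ε, and every vertex u ∈ C, it holds that |N(u) ∩ C| ≥ (1 − 9ε)·|C|. -/

import Mathlib

open scoped symmDiff Classical

/-- Two vertices `u, v` are in `ε`-agreement in `G` if
`|N(u) △ N(v)| < ε·max(|N(u)|, |N(v)|)`. -/
def InAgreement {V : Type*} [Fintype V] [DecidableEq V]
    (G : SimpleGraph V) [DecidableRel G.Adj] (ε : ℝ) (u v : V) : Prop :=
  ((G.neighborFinset u ∆ G.neighborFinset v).card : ℝ) <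
    ε * (max (G.neighborFinset u).card (G.neighborFinset v).card : ℕ)

/-- A vertex is `ε`-heavy if it is in `ε`-agreement with more than a
`(1 − ε)`-fraction of its neighbors. -/
noncomputable def Heavy {V : Type*} [Fintype V] [DecidableEq V]
    (G : SimpleGraph V) [DecidableRel G.Adj] (ε : ℝ) (u : V) : Prop :=
  (1 - ε) * ((G.neighborFinset u).card : ℝ) <
    (((G.neighborFinset u).filter (fun v => InAgreement G ε u v)).card : ℝ)

/-- The graph `G̃` obtained from `G` by deleting every edge whose endpoints are
not in `ε`-agreement and then every remaining edge both of whose endpoints are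
`ε`-light. -/
noncomputable def tildeGraph {V : Type*} [Fintype V] [DecidableEq V]
    (G : SimpleGraph V) [DecidableRel G.Adj] (ε : ℝ) : SimpleGraph V where
  Adj u v := G.Adj u v ∧ InAgreement G ε u v ∧ (Heavy G ε u ∨ Heavy G ε v)
  symm := ⟨by
    intro u v ⟨h1, h2, h3⟩
    refine ⟨h1.symm, ?_, h3.symm⟩
    unfold InAgreement at h2 ⊢
    rwa [symmDiff_comm, max_comm]⟩
  loopless := ⟨fun u h => G.irrefl h.1⟩

/-- `C` is a cluster of the agreement decomposition of `G` with parameter `ε`: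
the vertex set of a connected component of `G̃`. -/
noncomputable def IsCluster {V : Type*} [Fintype V] [DecidableEq V]
    (G : SimpleGraph V) [DecidableRel G.Adj] (ε : ℝ) (C : Finset V) : Prop :=
  ∃ v : V, C = Finset.univ.filter (fun w => (tildeGraph G ε).Reachable v w)

set_option linter.unusedSectionVars false
set_option maxHeartbeats 1000000

namespace AgreeAux

variable {V : Type} [Fintype V] [DecidableEq V]
  (G : SimpleGraph V) [DecidableRel G.Adj] (ε : ℝ)

local notation "N" => G.neighborFinset

/-- real degree -/
noncomputable def d (u : V) : ℝ := (G.neighborFinset u).card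

/-- real symmetric difference size -/
noncomputable def sd (u v : V) : ℝ := ((G.neighborFinset u ∆ G.neighborFinset v).card : ℝ)

lemma d_nonneg (u : V) : 0 ≤ d G u := Nat.cast_nonneg _

lemma sd_nonneg (u v : V) : 0 ≤ sd G u v := Nat.cast_nonneg _

lemma sd_comm (u v : V) : sd G u v = sd G v u := by
  unfold sd; rw [symmDiff_comm]

lemma sd_self (u : V) : sd G u u = 0 := by
  unfold sd; rw [symmDiff_self]; simp

lemma agree_sd {u v : V} (h : InAgreement G ε u v) :
    sd G u v < ε * max (d G u) (d G v) := by
  unfold InAgreement at h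
  unfold sd d
  rwa [Nat.cast_max] at h

lemma card_sdiff_le_sd (u v : V) :
    ((G.neighborFinset u \ G.neighborFinset v).card : ℝ) ≤ sd G u v := by
  unfold sd
  exact_mod_cast Finset.card_le_card (by
    intro x hx
    rw [Finset.mem_symmDiff]
    rw [Finset.mem_sdiff] at hx
    exact Or.inl hx)

lemma d_le_d_add_sd (u v : V) : d G u ≤ d G v + sd G u v := by
  have h1 : (G.neighborFinset u).card ≤ (G.neighborFinset u \ G.neighborFinset v).card
      + (G.neighborFinset v).card := Finset.card_le_card_sdiff_add_card
  have h2 := card_sdiff_le_sd G u v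
  unfold d
  push_cast
  have : ((G.neighborFinset u).card : ℝ) ≤ ((G.neighborFinset u \ G.neighborFinset v).card : ℝ)
      + (G.neighborFinset v).card := by exact_mod_cast h1
  linarith

lemma sd_triangle (u v w : V) : sd G u w ≤ sd G u v + sd G v w := by
  unfold sd
  have h := symmDiff_triangle (G.neighborFinset u) (G.neighborFinset v) (G.neighborFinset w)
  have := Finset.card_le_card h
  have h2 := Finset.card_union_le (G.neighborFinset u ∆ G.neighborFinset v)
    (G.neighborFinset v ∆ G.neighborFinset w)
  push_cast
  exact_mod_cast le_trans this h2



variable {G} {ε}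

lemma not_self_mem (u : V) : u ∉ G.neighborFinset u := by
  simp [SimpleGraph.mem_neighborFinset]

lemma edge_sd_ge_two {u v : V} (h : (tildeGraph G ε).Adj u v) : (2:ℝ) ≤ sd G u v := by
  obtain ⟨hadj, _, _⟩ := h
  have hne : u ≠ v := hadj.ne
  have hu : u ∈ G.neighborFinset u ∆ G.neighborFinset v := by
    rw [Finset.mem_symmDiff]
    exact Or.inr ⟨by simp [SimpleGraph.mem_neighborFinset, hadj.symm], not_self_mem u⟩
  have hv : v ∈ G.neighborFinset u ∆ G.neighborFinset v := by
    rw [Finset.mem_symmDiff]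
    exact Or.inl ⟨by simp [SimpleGraph.mem_neighborFinset, hadj], not_self_mem v⟩
  have : ({u, v} : Finset V) ⊆ G.neighborFinset u ∆ G.neighborFinset v := by
    intro x hx
    rcases Finset.mem_insert.mp hx with rfl | hx
    · exact hu
    · rw [Finset.mem_singleton] at hx; subst hx; exact hv
  have hcard := Finset.card_le_card this
  rw [Finset.card_pair hne] at hcard
  unfold sd
  exact_mod_cast hcard

lemma heavy_nonagree (hε : 0 < ε) {u : V} (h : Heavy G ε u) :
    (((G.neighborFinset u).filter (fun v => ¬ InAgreement G ε u v)).card : ℝ) < ε * d G u := by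
  unfold Heavy at h
  have hsplit := Finset.card_filter_add_card_filter_not
    (s := G.neighborFinset u) (p := fun v => InAgreement G ε u v)
  have heq : (((G.neighborFinset u).filter (fun v => InAgreement G ε u v)).card : ℝ)
      + (((G.neighborFinset u).filter (fun v => ¬ InAgreement G ε u v)).card : ℝ)
      = d G u := by unfold d; exact_mod_cast hsplit
  unfold d at heq ⊢
  nlinarith [heq, h]

section Cluster

variable {v₀ : V} {C : Finset V}

/-- membership characterization -/
def ClusterOf (G : SimpleGraph V) [DecidableRel G.Adj] (ε : ℝ) (v₀ : V) (C : Finset V) : Prop :=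
  ∀ w, w ∈ C ↔ (tildeGraph G ε).Reachable v₀ w

lemma adj_mem (hC : ClusterOf G ε v₀ C) {u w : V} (hu : u ∈ C)
    (h : (tildeGraph G ε).Adj u w) : w ∈ C := by
  rw [hC] at hu ⊢
  exact hu.trans ⟨SimpleGraph.Walk.cons h SimpleGraph.Walk.nil⟩

lemma reach_of_mem (hC : ClusterOf G ε v₀ C) {u w : V} (hu : u ∈ C) (hw : w ∈ C) :
    (tildeGraph G ε).Reachable u w :=
  ((hC u).mp hu).symm.trans ((hC w).mp hw)

lemma exists_nbr (hC : ClusterOf G ε v₀ C) (hC2 : 1 < C.card) {u : V} (hu : u ∈ C) :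
    ∃ w, (tildeGraph G ε).Adj u w := by
  obtain ⟨a, ha, b, hb, hab⟩ := Finset.one_lt_card.mp hC2
  have hne : a ≠ u ∨ b ≠ u := by
    by_contra h
    push_neg at h
    exact hab (h.1.trans h.2.symm)
  obtain ⟨t, ht, htu⟩ : ∃ t, t ∈ C ∧ t ≠ u := by
    rcases hne with h | h
    · exact ⟨a, ha, h⟩
    · exact ⟨b, hb, h⟩
  obtain ⟨p⟩ := reach_of_mem hC hu ht
  cases p with
  | nil => exact absurd rfl htu.symm
  | cons h _ => exact ⟨_, h⟩

lemma deg_lb (hC : ClusterOf G ε v₀ C) (hC2 : 1 < C.card) (hε : 0 < ε) (hε1 : ε ≤ 1/100)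
    {u : V} (hu : u ∈ C) : 2 * (1 - ε) < ε * d G u := by
  obtain ⟨w, hw⟩ := exists_nbr hC hC2 hu
  have h2 := edge_sd_ge_two hw
  have hag := agree_sd G ε hw.2.1
  have hdu := d_le_d_add_sd G u w
  have hdw := d_le_d_add_sd G w u
  rw [sd_comm] at hdw
  rcases le_total (d G u) (d G w) with h | h
  · rw [max_eq_right h] at hag
    nlinarith [sd_nonneg G u w, d_nonneg G u, d_nonneg G w]
  · rw [max_eq_left h] at hag
    nlinarith [sd_nonneg G u w, d_nonneg G u, d_nonneg G w]

lemma deg_pos (hC : ClusterOf G ε v₀ C) (hC2 : 1 < C.card) (hε : 0 < ε) (hε1 : ε ≤ 1/100)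
    {u : V} (hu : u ∈ C) : 0 < d G u := by
  have := deg_lb hC hC2 hε hε1 hu
  nlinarith

end Cluster

lemma shrink {a b s q r : ℝ} (ha : 0 ≤ a) (hr : 0 ≤ r) (hq : 0 ≤ q)
    (hb : b ≤ a + s) (hqs : q * s ≤ r * max a b) : (q - r) * max a b ≤ q * a := by
  rcases le_total a b with h | h
  · rw [max_eq_right h] at *
    nlinarith [mul_le_mul_of_nonneg_left hb hq]
  · rw [max_eq_left h] at *
    nlinarith

/-- key collapse: two heavy vertices with large common neighborhood are in near-agreement -/
lemma collapse (hε : 0 < ε) (hε1 : ε ≤ 1/100) {u w : V}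
    (hu : Heavy G ε u) (hw : Heavy G ε w)
    (hover : ε * d G u + ε * d G w <
      ((G.neighborFinset u ∩ G.neighborFinset w).card : ℝ)) :
    (1 - ε) * sd G u w ≤ 2 * ε * max (d G u) (d G w) := by
  classical
  set Bu := (G.neighborFinset u).filter (fun v => ¬ InAgreement G ε u v) with hBu
  set Bw := (G.neighborFinset w).filter (fun v => ¬ InAgreement G ε w v) with hBw
  have hBu' := heavy_nonagree hε hu
  have hBw' := heavy_nonagree hε hw
  -- find common neighbor agreeing with both
  have hcard : (G.neighborFinset u ∩ G.neighborFinset w).card ≤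
      ((G.neighborFinset u ∩ G.neighborFinset w) \ (Bu ∪ Bw)).card + (Bu ∪ Bw).card :=
    Finset.card_le_card_sdiff_add_card
  have hun : ((Bu ∪ Bw).card : ℝ) ≤ (Bu.card : ℝ) + Bw.card := by
    exact_mod_cast Finset.card_union_le Bu Bw
  have hX : ((G.neighborFinset u ∩ G.neighborFinset w) \ (Bu ∪ Bw)).Nonempty := by
    rw [← Finset.card_pos]
    by_contra hz
    push_neg at hz
    have h0 : (G.neighborFinset u ∩ G.neighborFinset w).card ≤ (Bu ∪ Bw).card := by omega
    have h0' : ((G.neighborFinset u ∩ G.neighborFinset w).card : ℝ) ≤ ((Bu ∪ Bw).card : ℝ) := by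
      exact_mod_cast h0
    rw [hBu, hBw] at hun
    linarith
  obtain ⟨y, hy⟩ := hX
  rw [Finset.mem_sdiff, Finset.mem_inter, Finset.mem_union] at hy
  obtain ⟨⟨hyu, hyw⟩, hyB⟩ := hy
  push_neg at hyB
  have hAu : InAgreement G ε u y := by
    by_contra hn
    exact hyB.1 (Finset.mem_filter.mpr ⟨hyu, hn⟩)
  have hAw : InAgreement G ε w y := by
    by_contra hn
    exact hyB.2 (Finset.mem_filter.mpr ⟨hyw, hn⟩)
  -- triangle and size comparisons
  have f1 : sd G u y ≤ ε * max (d G u) (d G y) := (agree_sd G ε hAu).le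
  have f3 : sd G w y ≤ ε * max (d G w) (d G y) := (agree_sd G ε hAw).le
  have hb1 : d G y ≤ d G u + sd G u y := by
    have := d_le_d_add_sd G y u; rwa [sd_comm] at this
  have hb3 : d G y ≤ d G w + sd G w y := by
    have := d_le_d_add_sd G y w; rwa [sd_comm] at this
  have f2 : (1 - ε) * max (d G u) (d G y) ≤ 1 * d G u :=
    shrink (d_nonneg G u) hε.le zero_le_one hb1 (by rw [one_mul]; exact f1)
  have f4 : (1 - ε) * max (d G w) (d G y) ≤ 1 * d G w :=
    shrink (d_nonneg G w) hε.le zero_le_one hb3 (by rw [one_mul]; exact f3)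
  have htri : sd G u w ≤ sd G u y + sd G w y := by
    have h := sd_triangle G u y w
    rw [sd_comm G y w] at h
    exact h
  have h1e : (0:ℝ) ≤ 1 - ε := by linarith
  have p1 := mul_le_mul_of_nonneg_left f1 h1e
  have p3 := mul_le_mul_of_nonneg_left f3 h1e
  have p2 := mul_le_mul_of_nonneg_left f2 hε.le
  have p4 := mul_le_mul_of_nonneg_left f4 hε.le
  have p5 := mul_le_mul_of_nonneg_left htri h1e
  have m1 : d G u ≤ max (d G u) (d G w) := le_max_left _ _
  have m2 : d G w ≤ max (d G u) (d G w) := le_max_right _ _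
  nlinarith [p1, p2, p3, p4, p5, m1, m2, hε]

/-- combining: heavy u, heavy w, both close to some m with positive degree -/
lemma combine (hε : 0 < ε) (hε1 : ε ≤ 1/100) {u w m : V}
    (hu : Heavy G ε u) (hw : Heavy G ε w) (hdm : 0 < d G m)
    (h1 : (1 - ε) * sd G u m ≤ 2 * ε * max (d G u) (d G m))
    (h2 : sd G m w ≤ 3 * ε * max (d G m) (d G w)) :
    (1 - ε) * sd G u w ≤ 2 * ε * max (d G u) (d G w) := by
  rw [max_comm (d G u) (d G m)] at h1
  -- intersection lower bound
  have hsub : G.neighborFinset m \ ((G.neighborFinset m ∆ G.neighborFinset u)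
      ∪ (G.neighborFinset m ∆ G.neighborFinset w)) ⊆
      G.neighborFinset u ∩ G.neighborFinset w := by
    intro x hx
    rw [Finset.mem_sdiff, Finset.mem_union, Finset.mem_symmDiff, Finset.mem_symmDiff] at hx
    push_neg at hx
    obtain ⟨hm, hx1, hx2⟩ := hx
    rw [Finset.mem_inter]
    exact ⟨hx1.1 hm, hx2.1 hm⟩
  have hcard1 : (G.neighborFinset m).card ≤
      (G.neighborFinset m \ ((G.neighborFinset m ∆ G.neighborFinset u)
        ∪ (G.neighborFinset m ∆ G.neighborFinset w))).card
      + ((G.neighborFinset m ∆ G.neighborFinset u)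
        ∪ (G.neighborFinset m ∆ G.neighborFinset w)).card :=
    Finset.card_le_card_sdiff_add_card
  have hcard2 := Finset.card_le_card hsub
  have hcard3 := Finset.card_union_le (G.neighborFinset m ∆ G.neighborFinset u)
    (G.neighborFinset m ∆ G.neighborFinset w)
  have hX : d G m - sd G m u - sd G m w ≤
      ((G.neighborFinset u ∩ G.neighborFinset w).card : ℝ) := by
    unfold d sd
    have hn : (G.neighborFinset m).card ≤
        (G.neighborFinset m \ ((G.neighborFinset m ∆ G.neighborFinset u)
        ∪ (G.neighborFinset m ∆ G.neighborFinset w))).card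
        + (G.neighborFinset m ∆ G.neighborFinset u).card
        + (G.neighborFinset m ∆ G.neighborFinset w).card := by omega
    have c1 : ((G.neighborFinset m).card : ℝ) ≤
        ((G.neighborFinset m \ ((G.neighborFinset m ∆ G.neighborFinset u)
        ∪ (G.neighborFinset m ∆ G.neighborFinset w))).card : ℝ)
        + ((G.neighborFinset m ∆ G.neighborFinset u).card : ℝ)
        + ((G.neighborFinset m ∆ G.neighborFinset w).card : ℝ) := by
      exact_mod_cast hn
    have c2 : ((G.neighborFinset m \ ((G.neighborFinset m ∆ G.neighborFinset u)
        ∪ (G.neighborFinset m ∆ G.neighborFinset w))).card : ℝ) ≤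
        ((G.neighborFinset u ∩ G.neighborFinset w).card : ℝ) := by exact_mod_cast hcard2
    linarith
  rw [sd_comm G m u] at hX
  -- size comparisons
  have hbu : d G u ≤ d G m + sd G u m := d_le_d_add_sd G u m
  have hbw : d G w ≤ d G m + sd G m w := by
    have := d_le_d_add_sd G w m
    rwa [sd_comm G w m] at this
  have s1 : ((1 - ε) - 2 * ε) * max (d G m) (d G u) ≤ (1 - ε) * d G m :=
    shrink (d_nonneg G m) (by linarith) (by linarith) hbu h1
  have s2 : (1 - 3 * ε) * max (d G m) (d G w) ≤ 1 * d G m :=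
    shrink (d_nonneg G m) (by linarith) zero_le_one hbw (by rw [one_mul]; exact h2)
  have mU : d G u ≤ max (d G m) (d G u) := le_max_right _ _
  have mW : d G w ≤ max (d G m) (d G w) := le_max_right _ _
  have mM1 : d G m ≤ max (d G m) (d G u) := le_max_left _ _
  have mM2 : d G m ≤ max (d G m) (d G w) := le_max_left _ _
  have hmax1 : (0:ℝ) ≤ max (d G m) (d G u) := le_trans hdm.le mM1
  have hmax2 : (0:ℝ) ≤ max (d G m) (d G w) := le_trans hdm.le mM2
  -- derived: (1-3ε) du ≤ (1-ε) dm ; (1-3ε) dw ≤ dm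
  have du1 : (1 - 3*ε) * d G u ≤ (1 - ε) * d G m := by nlinarith [s1, mU, hmax1]
  have dw1 : (1 - 3*ε) * d G w ≤ d G m := by nlinarith [s2, mW, hmax2]
  -- derived: (1-3ε) sd u m ≤ 2 ε dm ; (1-3ε) sd m w ≤ 3 ε dm
  have sd1 : (1 - 3*ε) * sd G u m ≤ 2 * ε * d G m := by
    have e1 := mul_le_mul_of_nonneg_left h1 (by linarith : (0:ℝ) ≤ 1 - 3*ε)
    have e2 := mul_le_mul_of_nonneg_left s1 (by linarith : (0:ℝ) ≤ 2*ε)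
    have q1 : (1-ε) * ((1 - 3*ε) * sd G u m) ≤ (1-ε) * (2 * ε * d G m) := by
      nlinarith [e1, e2]
    have := (mul_le_mul_iff_right₀ (by linarith : (0:ℝ) < 1 - ε)).mp q1
    linarith
  have sd2 : (1 - 3*ε) * sd G m w ≤ 3 * ε * d G m := by
    have e1 := mul_le_mul_of_nonneg_left h2 (by linarith : (0:ℝ) ≤ 1 - 3*ε)
    have e2 := mul_le_mul_of_nonneg_left s2 (by linarith : (0:ℝ) ≤ 3*ε)
    nlinarith [e1, e2]
  -- overlap hypothesis of collapse
  have hover : ε * d G u + ε * d G w <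
      ((G.neighborFinset u ∩ G.neighborFinset w).card : ℝ) := by
    have key : (1 - 3*ε) * (ε * d G u + ε * d G w) <
        (1 - 3*ε) * (d G m - sd G u m - sd G m w) := by
      have e1 := mul_le_mul_of_nonneg_left du1 hε.le
      have e2 := mul_le_mul_of_nonneg_left dw1 hε.le
      have hpos : (0:ℝ) < (1 - 10*ε + ε^2) * d G m := by
        apply mul_pos _ hdm
        nlinarith
      nlinarith [sd1, sd2, e1, e2, hpos]
    have := (mul_lt_mul_iff_right₀ (by linarith : (0:ℝ) < 1 - 3*ε)).mp key
    linarith [hX]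
  exact collapse hε hε1 hu hw hover

/-- all pairs of heavy vertices in the same nontrivial cluster nearly agree -/
lemma heavy_walk (hC : ClusterOf G ε v₀ C) (hC2 : 1 < C.card) (hε : 0 < ε) (hε1 : ε ≤ 1/100) :
    ∀ n : ℕ, ∀ u w : V, u ∈ C → Heavy G ε u → Heavy G ε w →
      ∀ p : (tildeGraph G ε).Walk u w, p.length ≤ n →
        (1 - ε) * sd G u w ≤ 2 * ε * max (d G u) (d G w) := by
  intro n
  induction n with
  | zero =>
    intro u w hu hHu hHw p hlen
    cases p with
    | nil =>
      rw [sd_self]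
      have : (0:ℝ) ≤ max (d G u) (d G u) := le_max_left _ _ |>.trans' (d_nonneg G u)
      nlinarith
    | cons h q => simp at hlen
  | succ n ih =>
    intro u w hu hHu hHw p hlen
    cases p with
    | nil =>
      rw [sd_self]
      have : (0:ℝ) ≤ max (d G u) (d G u) := le_max_left _ _ |>.trans' (d_nonneg G u)
      nlinarith
    | @cons _ x _ hadj q =>
      cases q with
      | nil =>
        have hag := agree_sd G ε hadj.2.1
        have hmax : (0:ℝ) ≤ max (d G u) (d G w) := le_trans (d_nonneg G u) (le_max_left _ _)
        nlinarith [sd_nonneg G u w]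
      | @cons _ y _ hadj2 r =>
        have hx : x ∈ C := adj_mem hC hu hadj
        have hy : y ∈ C := adj_mem hC hx hadj2
        have hlen' : ((SimpleGraph.Walk.cons hadj (SimpleGraph.Walk.cons hadj2 r)).length) = r.length + 2 := by
          simp [SimpleGraph.Walk.length_cons]
        rcases hadj2.2.2 with hHx | hHy
        · -- x heavy; m := x
          have h1 : (1 - ε) * sd G u x ≤ 2 * ε * max (d G u) (d G x) := by
            have hag := agree_sd G ε hadj.2.1
            have hmax : (0:ℝ) ≤ max (d G u) (d G x) := le_trans (d_nonneg G u) (le_max_left _ _)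
            nlinarith [sd_nonneg G u x]
          have hihout : (1 - ε) * sd G x w ≤ 2 * ε * max (d G x) (d G w) := by
            apply ih x w hx hHx hHw (SimpleGraph.Walk.cons hadj2 r)
            rw [hlen'] at hlen
            simp [SimpleGraph.Walk.length_cons]
            omega
          have h2 : sd G x w ≤ 3 * ε * max (d G x) (d G w) := by
            have hmax : (0:ℝ) ≤ max (d G x) (d G w) := le_trans (d_nonneg G x) (le_max_left _ _)
            nlinarith [sd_nonneg G x w, hihout]
          have h1' : (1 - ε) * sd G u x ≤ 2 * ε * max (d G u) (d G x) := h1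
          exact combine hε hε1 hHu hHw (deg_pos hC hC2 hε hε1 hx) h1' h2
        · -- y heavy; m := y
          have hagux := agree_sd G ε hadj.2.1
          have hagxy := agree_sd G ε hadj2.2.1
          rw [max_comm (d G x) (d G y)] at hagxy
          have hbx : d G x ≤ d G u + sd G u x := by
            have := d_le_d_add_sd G x u; rwa [sd_comm] at this
          have hbx' : d G x ≤ d G y + sd G x y := by
            have := d_le_d_add_sd G x y; exact this
          have su : (1 - ε) * max (d G u) (d G x) ≤ 1 * d G u :=
            shrink (d_nonneg G u) hε.le zero_le_one hbx (by rw [one_mul]; exact hagux.le)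
          have sy : (1 - ε) * max (d G y) (d G x) ≤ 1 * d G y :=
            shrink (d_nonneg G y) hε.le zero_le_one hbx'
              (by rw [one_mul]; exact hagxy.le)
          have htri : sd G u y ≤ sd G u x + sd G x y := sd_triangle G u x y
          have h1 : (1 - ε) * sd G u y ≤ 2 * ε * max (d G u) (d G y) := by
            have e1 := mul_le_mul_of_nonneg_left hagux.le (by linarith : (0:ℝ) ≤ 1 - ε)
            have e2 := mul_le_mul_of_nonneg_left hagxy.le (by linarith : (0:ℝ) ≤ 1 - ε)
            have e3 := mul_le_mul_of_nonneg_left su hε.le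
            have e4 := mul_le_mul_of_nonneg_left sy hε.le
            have e5 := mul_le_mul_of_nonneg_left htri (by linarith : (0:ℝ) ≤ 1 - ε)
            have e6 := mul_le_mul_of_nonneg_left (le_max_left (d G u) (d G y)) hε.le
            have e7 := mul_le_mul_of_nonneg_left (le_max_right (d G u) (d G y)) hε.le
            nlinarith [e1, e2, e3, e4, e5, e6, e7]
          have hihout : (1 - ε) * sd G y w ≤ 2 * ε * max (d G y) (d G w) := by
            apply ih y w hy hHy hHw r
            rw [hlen'] at hlen
            omega
          have h2 : sd G y w ≤ 3 * ε * max (d G y) (d G w) := by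
            have hmax : (0:ℝ) ≤ max (d G y) (d G w) := le_trans (d_nonneg G y) (le_max_left _ _)
            nlinarith [sd_nonneg G y w, hihout]
          exact combine hε hε1 hHu hHw (deg_pos hC hC2 hε hε1 hy) h1 h2

/-- heavy-heavy agreement in a cluster -/
lemma heavy_heavy (hC : ClusterOf G ε v₀ C) (hC2 : 1 < C.card) (hε : 0 < ε) (hε1 : ε ≤ 1/100)
    {u w : V} (hu : u ∈ C) (hw : w ∈ C) (hHu : Heavy G ε u) (hHw : Heavy G ε w) :
    sd G u w ≤ 3 * ε * max (d G u) (d G w) := by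
  obtain ⟨p⟩ := reach_of_mem hC hu hw
  have := heavy_walk hC hC2 hε hε1 p.length u w hu hHu hHw p le_rfl
  have hmax : (0:ℝ) ≤ max (d G u) (d G w) := le_trans (d_nonneg G u) (le_max_left _ _)
  nlinarith [sd_nonneg G u w]

lemma heavy_partner (hC : ClusterOf G ε v₀ C) (hC2 : 1 < C.card) (hε : 0 < ε)
    {u : V} (hu : u ∈ C) :
    ∃ h, h ∈ C ∧ Heavy G ε h ∧ sd G u h ≤ ε * max (d G u) (d G h) := by
  by_cases hH : Heavy G ε u
  · refine ⟨u, hu, hH, ?_⟩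
    rw [sd_self]
    exact mul_nonneg hε.le (le_trans (d_nonneg G u) (le_max_left _ _))
  · obtain ⟨w, hw⟩ := exists_nbr hC hC2 hu
    rcases hw.2.2 with h | h
    · exact absurd h hH
    · exact ⟨w, adj_mem hC hu hw, h, (agree_sd G ε hw.2.1).le⟩

/-- every vertex of the cluster nearly agrees with every heavy vertex of the cluster -/
lemma all_heavy (hC : ClusterOf G ε v₀ C) (hC2 : 1 < C.card) (hε : 0 < ε) (hε1 : ε ≤ 1/100)
    {w h : V} (hw : w ∈ C) (hh : h ∈ C) (hH : Heavy G ε h) :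
    (1 - ε) * sd G w h ≤ 4 * ε * max (d G w) (d G h) := by
  obtain ⟨p, hpC, hHp, hsd⟩ := heavy_partner hC hC2 hε hw
  have hph := heavy_heavy hC hC2 hε hε1 hpC hh hHp hH
  have hbp : d G p ≤ d G w + sd G w p := by
    have := d_le_d_add_sd G p w; rwa [sd_comm] at this
  have sw : (1 - ε) * max (d G w) (d G p) ≤ 1 * d G w :=
    shrink (d_nonneg G w) hε.le zero_le_one hbp (by rw [one_mul]; exact hsd)
  have hpmax : (1 - ε) * max (d G p) (d G h) ≤ max (d G w) (d G h) := by
    have hp1 : (1 - ε) * d G p ≤ d G w := by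
      have := mul_le_mul_of_nonneg_left (le_max_right (d G w) (d G p))
        (by linarith : (0:ℝ) ≤ 1 - ε)
      linarith [sw]
    rcases le_total (d G p) (d G h) with hc | hc
    · rw [max_eq_right hc]
      have : d G h ≤ max (d G w) (d G h) := le_max_right _ _
      nlinarith [d_nonneg G h]
    · rw [max_eq_left hc]
      have : d G w ≤ max (d G w) (d G h) := le_max_left _ _
      linarith
  have htri : sd G w h ≤ sd G w p + sd G p h := sd_triangle G w p h
  have e1 := mul_le_mul_of_nonneg_left hsd (by linarith : (0:ℝ) ≤ 1 - ε)
  have e2 := mul_le_mul_of_nonneg_left sw hε.le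
  have e3 := mul_le_mul_of_nonneg_left hph (by linarith : (0:ℝ) ≤ 1 - ε)
  have e4 := mul_le_mul_of_nonneg_left hpmax (by nlinarith : (0:ℝ) ≤ 3 * ε)
  have e5 := mul_le_mul_of_nonneg_left htri (by linarith : (0:ℝ) ≤ 1 - ε)
  have e6 := mul_le_mul_of_nonneg_left (le_max_left (d G w) (d G h)) hε.le
  nlinarith [e1, e2, e3, e4, e5, e6]

/-- every vertex of a nontrivial cluster has most of its neighborhood inside the cluster -/
lemma cluster_nbr (hC : ClusterOf G ε v₀ C) (hC2 : 1 < C.card) (hε : 0 < ε) (hε1 : ε ≤ 1/100)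
    {v : V} (hv : v ∈ C) :
    (1 - 3*ε) * d G v ≤ (1 - ε) * ((G.neighborFinset v ∩ C).card : ℝ) := by
  obtain ⟨h, hhC, hH, hsd⟩ := heavy_partner hC hC2 hε hv
  have hNhC : G.neighborFinset h \ C ⊆
      (G.neighborFinset h).filter (fun y => ¬ InAgreement G ε h y) := by
    intro y hy
    rw [Finset.mem_sdiff] at hy
    rw [Finset.mem_filter]
    refine ⟨hy.1, fun hA => hy.2 ?_⟩
    exact adj_mem hC hhC ⟨(SimpleGraph.mem_neighborFinset _ _ _).mp hy.1, hA, Or.inl hH⟩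
  have hNhC' : ((G.neighborFinset h \ C).card : ℝ) < ε * d G h := by
    have := Finset.card_le_card hNhC
    have := heavy_nonagree hε hH
    have hc : ((G.neighborFinset h \ C).card : ℝ) ≤
        (((G.neighborFinset h).filter (fun y => ¬ InAgreement G ε h y)).card : ℝ) := by
      exact_mod_cast Finset.card_le_card hNhC
    linarith
  have hsplit : G.neighborFinset v \ C ⊆
      (G.neighborFinset v \ G.neighborFinset h) ∪ (G.neighborFinset h \ C) := by
    intro y hy
    rw [Finset.mem_sdiff] at hy
    rw [Finset.mem_union, Finset.mem_sdiff, Finset.mem_sdiff]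
    by_cases hyh : y ∈ G.neighborFinset h
    · exact Or.inr ⟨hyh, hy.2⟩
    · exact Or.inl ⟨hy.1, hyh⟩
  have hvc : ((G.neighborFinset v \ C).card : ℝ) ≤
      ((G.neighborFinset v \ G.neighborFinset h).card : ℝ) + ((G.neighborFinset h \ C).card : ℝ) := by
    have h1 := Finset.card_le_card hsplit
    have h2 := Finset.card_union_le (G.neighborFinset v \ G.neighborFinset h)
      (G.neighborFinset h \ C)
    exact_mod_cast le_trans h1 h2
  have hsdle := card_sdiff_le_sd G v h
  -- max comparison
  have hbh : d G h ≤ d G v + sd G v h := by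
    have := d_le_d_add_sd G h v; rwa [sd_comm] at this
  have sv : (1 - ε) * max (d G v) (d G h) ≤ 1 * d G v :=
    shrink (d_nonneg G v) hε.le zero_le_one hbh (by rw [one_mul]; exact hsd)
  have hdh : ε * d G h ≤ ε * max (d G v) (d G h) :=
    mul_le_mul_of_nonneg_left (le_max_right _ _) hε.le
  have hkey : (1 - ε) * ((G.neighborFinset v \ C).card : ℝ) ≤ 2 * ε * d G v := by
    have e1 := mul_le_mul_of_nonneg_left hvc (by linarith : (0:ℝ) ≤ 1 - ε)
    have e2 := mul_le_mul_of_nonneg_left hsd (by linarith : (0:ℝ) ≤ 1 - ε)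
    have e3 := mul_le_mul_of_nonneg_left hNhC'.le (by linarith : (0:ℝ) ≤ 1 - ε)
    have e4 := mul_le_mul_of_nonneg_left hdh (by linarith : (0:ℝ) ≤ 1 - ε)
    have e5 := mul_le_mul_of_nonneg_left hsdle (by linarith : (0:ℝ) ≤ 1 - ε)
    have e6 := mul_le_mul_of_nonneg_left sv hε.le
    nlinarith [e1, e2, e3, e4, e5, e6]
  have hid : ((G.neighborFinset v ∩ C).card : ℝ) + ((G.neighborFinset v \ C).card : ℝ) = d G v := by
    unfold d
    exact_mod_cast Finset.card_inter_add_card_sdiff (G.neighborFinset v) C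
  nlinarith [hkey, hid]

lemma main_est (hC : ClusterOf G ε v₀ C) (hC2 : 1 < C.card) (hε : 0 < ε) (hε1 : ε ≤ 1/100)
    {u : V} (hu : u ∈ C) :
    (1 - 9 * ε) * (C.card : ℝ) ≤ ((G.neighborFinset u ∩ C).card : ℝ) := by
  obtain ⟨h, hhC, hH, hsdu⟩ := heavy_partner hC hC2 hε hu
  classical
  set S : Finset V := (C \ G.neighborFinset h).erase h with hSdef
  have hSC : ∀ v ∈ S, v ∈ C := by
    intro v hv
    have := Finset.mem_of_mem_erase hv
    exact (Finset.mem_sdiff.mp this).1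
  have hSnh : ∀ v ∈ S, v ∉ G.neighborFinset h := by
    intro v hv
    exact (Finset.mem_sdiff.mp (Finset.mem_of_mem_erase hv)).2
  -- double counting
  have key : ∀ (T : Finset V) (v : V), (G.neighborFinset v ∩ T).card
      = ∑ w ∈ T, if G.Adj v w then 1 else 0 := by
    intro T v
    rw [Finset.inter_comm, ← Finset.filter_mem_eq_inter, Finset.card_filter]
    exact Finset.sum_congr rfl (fun w _ => by simp [SimpleGraph.mem_neighborFinset])
  have hdc : ∑ v ∈ S, (G.neighborFinset v ∩ C).card
      = ∑ w ∈ C, (G.neighborFinset w ∩ S).card := by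
    calc ∑ v ∈ S, (G.neighborFinset v ∩ C).card
        = ∑ v ∈ S, ∑ w ∈ C, if G.Adj v w then 1 else 0 :=
          Finset.sum_congr rfl (fun v _ => key C v)
      _ = ∑ w ∈ C, ∑ v ∈ S, if G.Adj v w then 1 else 0 := Finset.sum_comm
      _ = ∑ w ∈ C, (G.neighborFinset w ∩ S).card := by
          refine Finset.sum_congr rfl (fun w _ => ?_)
          rw [key S w]
          refine Finset.sum_congr rfl (fun v _ => ?_)
          by_cases hvw : G.Adj v w
          · rw [if_pos hvw, if_pos hvw.symm]
          · rw [if_neg hvw, if_neg (fun hc => hvw hc.symm)]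
  set T : ℝ := ((∑ v ∈ S, (G.neighborFinset v ∩ C).card : ℕ) : ℝ) with hTdef
  have hT0 : 0 ≤ T := Nat.cast_nonneg _
  have h1e : (0:ℝ) < 1 - ε := by linarith
  have h3e : (0:ℝ) ≤ 1 - 3*ε := by linarith
  have h5e : (0:ℝ) ≤ 1 - 5*ε := by linarith
  have hdh : 0 < d G h := deg_pos hC hC2 hε hε1 hhC
  have F2 : 2 * (1 - ε) < ε * d G h := deg_lb hC hC2 hε hε1 hhC
  -- per-vertex bounds
  have F4 : ∀ w ∈ C, (1 - 5*ε) * ((G.neighborFinset w ∩ S).card : ℝ) ≤ 4 * ε * d G h := by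
    intro w hw
    have hws := all_heavy hC hC2 hε hε1 hw hhC hH
    rw [max_comm (d G w) (d G h)] at hws
    have hcardle : ((G.neighborFinset w ∩ S).card : ℝ) ≤ sd G w h := by
      have hsub : G.neighborFinset w ∩ S ⊆ G.neighborFinset w \ G.neighborFinset h := by
        intro y hy
        rw [Finset.mem_inter] at hy
        rw [Finset.mem_sdiff]
        exact ⟨hy.1, hSnh y hy.2⟩
      have := Finset.card_le_card hsub
      have h2 := card_sdiff_le_sd G w h
      have : ((G.neighborFinset w ∩ S).card : ℝ) ≤
          ((G.neighborFinset w \ G.neighborFinset h).card : ℝ) := by exact_mod_cast this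
      linarith
    have sm : ((1-ε) - 4*ε) * max (d G h) (d G w) ≤ (1-ε) * d G h :=
      shrink (d_nonneg G h) (by linarith) h1e.le (d_le_d_add_sd G w h) hws
    have q1 : (1-ε) * ((1 - 5*ε) * ((G.neighborFinset w ∩ S).card : ℝ))
        ≤ (1-ε) * (4 * ε * d G h) := by
      have e1 := mul_le_mul_of_nonneg_left hcardle (mul_nonneg h5e h1e.le)
      have e2 := mul_le_mul_of_nonneg_left hws h5e
      have e3 := mul_le_mul_of_nonneg_left sm (by linarith : (0:ℝ) ≤ 4*ε)
      nlinarith [e1, e2, e3]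
    have := (mul_le_mul_iff_right₀ h1e).mp q1
    linarith
  have F5 : ∀ v ∈ S, (1 - 3*ε) * ((1 - 5*ε) * d G h)
      ≤ (1-ε)^2 * ((G.neighborFinset v ∩ C).card : ℝ) := by
    intro v hv
    have hvC := hSC v hv
    have hvh := all_heavy hC hC2 hε hε1 hvC hhC hH
    have hb : d G h ≤ d G v + sd G v h := by
      have := d_le_d_add_sd G h v; rwa [sd_comm] at this
    have sm : ((1-ε) - 4*ε) * max (d G v) (d G h) ≤ (1-ε) * d G v :=
      shrink (d_nonneg G v) (by linarith) h1e.le hb hvh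
    have hdvh : (1 - 5*ε) * d G h ≤ (1-ε) * d G v := by
      have := mul_le_mul_of_nonneg_left (le_max_right (d G v) (d G h)) h5e
      linarith [sm]
    have hcn := cluster_nbr hC hC2 hε hε1 hvC
    have e1 := mul_le_mul_of_nonneg_left hdvh h3e
    have e2 := mul_le_mul_of_nonneg_left hcn h1e.le
    nlinarith [e1, e2]
  -- sums
  have hsum1 : (S.card : ℝ) * ((1 - 3*ε) * ((1 - 5*ε) * d G h)) ≤ (1-ε)^2 * T := by
    have hle := Finset.card_nsmul_le_sum S
      (fun v => (1-ε)^2 * ((G.neighborFinset v ∩ C).card : ℝ))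
      ((1 - 3*ε) * ((1 - 5*ε) * d G h)) F5
    rw [nsmul_eq_mul] at hle
    have : ∑ v ∈ S, (1-ε)^2 * ((G.neighborFinset v ∩ C).card : ℝ) = (1-ε)^2 * T := by
      rw [hTdef, ← Finset.mul_sum]
      push_cast
      ring
    linarith [hle, this.symm.le, this.le]
  have hsum2 : (1 - 5*ε) * T ≤ (C.card : ℝ) * (4 * ε * d G h) := by
    have hle := Finset.sum_le_card_nsmul C
      (fun w => (1 - 5*ε) * ((G.neighborFinset w ∩ S).card : ℝ))
      (4 * ε * d G h) F4
    rw [nsmul_eq_mul] at hle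
    have heq : ∑ w ∈ C, (1 - 5*ε) * ((G.neighborFinset w ∩ S).card : ℝ) = (1 - 5*ε) * T := by
      rw [hTdef, hdc, ← Finset.mul_sum]
      push_cast
      ring
    linarith [hle, heq.le, heq.symm.le]
  -- C covered by S, h, N(h)
  have hcover : C ⊆ S ∪ {h} ∪ G.neighborFinset h := by
    intro v hv
    rw [Finset.mem_union, Finset.mem_union]
    by_cases hvh : v ∈ G.neighborFinset h
    · exact Or.inr hvh
    · by_cases hvh' : v = h
      · exact Or.inl (Or.inr (by simp [hvh']))
      · exact Or.inl (Or.inl (Finset.mem_erase.mpr ⟨hvh', Finset.mem_sdiff.mpr ⟨hv, hvh⟩⟩))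
  have hsub : ((C.card : ℝ)) ≤ (S.card : ℝ) + 1 + d G h := by
    have c1 := Finset.card_le_card hcover
    have c2 := Finset.card_union_le (S ∪ {h}) (G.neighborFinset h)
    have c3 := Finset.card_union_le S ({h} : Finset V)
    have : C.card ≤ S.card + 1 + (G.neighborFinset h).card := by
      simp only [Finset.card_singleton] at c3
      omega
    unfold d
    exact_mod_cast this
  -- endgame
  set s : ℝ := (S.card : ℝ) with hsdef
  set a : ℝ := (C.card : ℝ) with hadef
  have hs0 : 0 ≤ s := Nat.cast_nonneg _
  have ha0 : 0 ≤ a := Nat.cast_nonneg _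
  have F1' : (1-ε) * d G h ≤ d G u := by
    have hb : d G h ≤ d G u + sd G u h := d_le_d_add_sd G h u |>.trans (by rw [sd_comm])
    have sm : (1 - ε) * max (d G u) (d G h) ≤ 1 * d G u :=
      shrink (d_nonneg G u) hε.le zero_le_one hb (by rw [one_mul]; exact hsdu)
    have := mul_le_mul_of_nonneg_left (le_max_right (d G u) (d G h)) h1e.le
    linarith [sm]
  have F3 : (1 - 3*ε) * d G u ≤ (1-ε) * ((G.neighborFinset u ∩ C).card : ℝ) :=
    cluster_nbr hC hC2 hε hε1 hu
  set n : ℝ := ((G.neighborFinset u ∩ C).card : ℝ) with hndef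
  have hn0 : 0 ≤ n := Nat.cast_nonneg _
  -- step A
  have p1 := mul_le_mul_of_nonneg_left hsum1 h5e
  have p2 := mul_le_mul_of_nonneg_left hsum2 (sq_nonneg (1-ε))
  have hbig : (s * ((1-3*ε) * (1-5*ε)^2)) * d G h ≤ (4*ε*(1-ε)^2*a) * d G h := by
    nlinarith [p1, p2]
  have stepA : s * ((1-3*ε) * (1-5*ε)^2) ≤ 4*ε*(1-ε)^2*a :=
    le_of_mul_le_mul_right hbig hdh
  -- step B
  have hD : 4*(1-ε)^2 ≤ 5*((1-3*ε) * (1-5*ε)^2) := by nlinarith [sq_nonneg ε, hε, hε1, mul_nonneg (mul_nonneg hε.le hε.le) hε.le]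
  have hDpos : (0:ℝ) < (1-3*ε) * (1-5*ε)^2 := by nlinarith
  have p3 := mul_le_mul_of_nonneg_left hD (mul_nonneg hε.le ha0)
  have hB' : s * ((1-3*ε) * (1-5*ε)^2) ≤ (5*ε*a) * ((1-3*ε) * (1-5*ε)^2) := by
    nlinarith [stepA, p3]
  have stepB : s ≤ 5*ε*a := le_of_mul_le_mul_right hB' hDpos
  -- step C
  have hC' : (1 - 5*ε) * a ≤ 1 + d G h := by linarith [hsub, stepB]
  have p4 := mul_le_mul_of_nonneg_left hC' (by linarith : (0:ℝ) ≤ 2*(1-ε))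
  have stepC : 2*(1-ε)*(1-5*ε)*a ≤ (2-ε) * d G h := by nlinarith [p4, F2]
  -- step D
  have p5 := mul_le_mul_of_nonneg_left F1' h3e
  have hD' : ((1-3*ε) * d G h) * (1-ε) ≤ n * (1-ε) := by nlinarith [p5, F3]
  have stepD : (1-3*ε) * d G h ≤ n := le_of_mul_le_mul_right hD' h1e
  -- step E
  have k1 : (1-9*ε)*(2-ε) ≤ 2*(1-ε)*(1-5*ε)*(1-3*ε) := by
    nlinarith [hε, hε1, sq_nonneg ε, mul_nonneg (mul_nonneg hε.le hε.le) hε.le]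
  have p6 := mul_le_mul_of_nonneg_left stepC h3e
  have p7 := mul_le_mul_of_nonneg_left stepD (by linarith : (0:ℝ) ≤ 2-ε)
  have p8 := mul_le_mul_of_nonneg_left k1 ha0
  have hE' : ((1-9*ε)*a) * (2-ε) ≤ n * (2-ε) := by nlinarith [p6, p7, p8]
  exact le_of_mul_le_mul_right hE' (by linarith)

end AgreeAux

/-- Property 4: for every nontrivial cluster `C` of the agreement decomposition
and every `u ∈ C`, `|N(u) ∩ C| ≥ (1 − 9ε)·|C|`. -/
theorem cluster_nbr_inter_cluster_ge_of_cluster :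
    ∃ ε₀ : ℝ, 0 < ε₀ ∧
      ∀ (V : Type) (_ : Fintype V) (_ : DecidableEq V)
        (G : SimpleGraph V) (_ : DecidableRel G.Adj) (ε : ℝ), 0 < ε → ε < ε₀ →
        ∀ C : Finset V, IsCluster G ε C → 1 < C.card →
          ∀ u ∈ C, (1 - 9 * ε) * (C.card : ℝ) ≤
            ((G.neighborFinset u ∩ C).card : ℝ) := by
  refine ⟨1/100, by norm_num, ?_⟩
  intro V iF iD G iA ε hε hε₀ C hCl hC2 u hu
  obtain ⟨v₀, hCdef⟩ := hCl
  have hC : AgreeAux.ClusterOf G ε v₀ C := by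
    intro w
    rw [hCdef]
    simp
  exact AgreeAux.main_est hC hC2 hε (le_of_lt hε₀) hu
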